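/- Fix d ∈ ℕ+, ν > 1/2, α > 0 and constants c > 0, C̄ > 0. Assume the Matérn-type information-gain bound: for every m ∈ ℕ+, every λ > 0 and every m-tuple Z of points of 𝒳, I_{λ²I_m}(Z) ≤ C̄·(m/λ²)^{d/(2ν+d)}·(ln(1 + m/λ²))^{2ν/(2ν+d)}. Let (λ̄_T)_{T∈ℕ+} be strictly positive reals with λ̄_T² ≥ c·T^{−2ν/d}·(ln(1+T))^{2ν(1+α)/d} for all T ∈ ℕ+, and for each T let x_{T,1},…,x_{T,T} ∈ 𝒳̃ (a nonempty subset of 𝒳) be chosen by maximum variance reduction with noise level λ̄_T²: for every t ∈ [T] and x ∈ 𝒳̃, σ_{λ̄_T²I_{t−1}}(x; X_{T,t−1}) ≤ σ_{λ̄_T²I_{t−1}}(x_{T,t}; X_{T,t−1}). Then there exists T̄ ∈ ℕ+, depending only on c, C̄, α, d, ν, such that for every T ≥ T̄ and every x ∈ 𝒳̃: σ_{λ̄_T²I_T}(x; X_{T,T}) ≤ (4/T)·√( λ̄_T²·T·C̄·(T/λ̄_T²)^{d/(2ν+d)}·(ln(1 + T/λ̄_T²))^{2ν/(2ν+d)}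 ). -/

import Mathlib

open Matrix Real Finset

noncomputable section

universe u

/-- Gram (kernel) matrix of a finite tuple of points. -/
def gramMat {𝒳 : Type u} (k : 𝒳 → 𝒳 → ℝ) {m : ℕ} (X : Fin m → 𝒳) :
    Matrix (Fin m) (Fin m) ℝ :=
  Matrix.of fun i j => k (X i) (X j)

/-- Kernel vector `k(x, X)`. -/
def kVec {𝒳 : Type u} (k : 𝒳 → 𝒳 → ℝ) {m : ℕ} (X : Fin m → 𝒳) (x : 𝒳) : Fin m → ℝ :=
  fun i => k x (X i)

/-- Posterior variance `σ²_Σ(x; X)`. -/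
def postVar {𝒳 : Type u} (k : 𝒳 → 𝒳 → ℝ) {m : ℕ} (S : Matrix (Fin m) (Fin m) ℝ)
    (X : Fin m → 𝒳) (x : 𝒳) : ℝ :=
  k x x - kVec k X x ⬝ᵥ ((gramMat k X + S)⁻¹ *ᵥ kVec k X x)

/-- Posterior standard deviation `σ_Σ(x; X)`. -/
def postStd {𝒳 : Type u} (k : 𝒳 → 𝒳 → ℝ) {m : ℕ} (S : Matrix (Fin m) (Fin m) ℝ)
    (X : Fin m → 𝒳) (x : 𝒳) : ℝ :=
  Real.sqrt (postVar k S X x)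

/-- Posterior mean `μ_Σ(x; X, y)`. -/
def postMean {𝒳 : Type u} (k : 𝒳 → 𝒳 → ℝ) {m : ℕ} (S : Matrix (Fin m) (Fin m) ℝ)
    (X : Fin m → 𝒳) (y : Fin m → ℝ) (x : 𝒳) : ℝ :=
  kVec k X x ⬝ᵥ ((gramMat k X + S)⁻¹ *ᵥ y)

/-- Information gain `I_Σ(Z)`. -/
def infoGain {𝒳 : Type u} (k : 𝒳 → 𝒳 → ℝ) {m : ℕ} (S : Matrix (Fin m) (Fin m) ℝ)
    (Z : Fin m → 𝒳) : ℝ :=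
  (1 / 2) * Real.log ((S + gramMat k Z).det / S.det)

/-- `k` is a symmetric positive semidefinite kernel. -/
def IsKernel {𝒳 : Type u} (k : 𝒳 → 𝒳 → ℝ) : Prop :=
  (∀ x y, k x y = k y x) ∧ ∀ (m : ℕ) (Z : Fin m → 𝒳), (gramMat k Z).PosSemidef

/-- Prefix of length `t` of a sequence of points. -/
def preT {𝒳 : Type u} (x : ℕ → 𝒳) (t : ℕ) : Fin t → 𝒳 := fun i => x i.val

section Aux
variable {𝒳 : Type u} {k : 𝒳 → 𝒳 → ℝ}

lemma smulone_posdef {m : ℕ} {l2 : ℝ} (hl2 : 0 < l2) :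
    (l2 • (1 : Matrix (Fin m) (Fin m) ℝ)).PosDef := by
  rw [Matrix.smul_one_eq_diagonal]
  exact Matrix.PosDef.diagonal fun _ => hl2

lemma A_posdef (hk : IsKernel k) {m : ℕ} (X : Fin m → 𝒳) {l2 : ℝ} (hl2 : 0 < l2) :
    (gramMat k X + l2 • (1 : Matrix (Fin m) (Fin m) ℝ)).PosDef :=
  Matrix.PosDef.posSemidef_add (hk.2 m X) (smulone_posdef hl2)

lemma quad_key (hk : IsKernel k) {t : ℕ} (X : Fin t → 𝒳) (x : 𝒳) (w : Fin t → ℝ) :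
    0 ≤ k x x - 2 * (w ⬝ᵥ kVec k X x) + w ⬝ᵥ (gramMat k X *ᵥ w) := by
  have h := (hk.2 (t+1) (Fin.snoc X x)).dotProduct_mulVec_nonneg (Fin.snoc w (-1))
  have hsym : ∀ i, k (X i) x = k x (X i) := fun i => hk.1 _ _
  simp only [star_trivial, dotProduct, Matrix.mulVec, gramMat, Matrix.of_apply,
    Fin.sum_univ_castSucc, Fin.snoc_castSucc, Fin.snoc_last, hsym] at h
  simp only [dotProduct, Matrix.mulVec, gramMat, kVec, Matrix.of_apply, Finset.mul_sum]
  convert h using 1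
  · rfl
  simp only [mul_add, mul_neg, mul_one, neg_mul, one_mul, neg_neg, mul_comm,
    Finset.sum_add_distrib, Finset.sum_neg_distrib]
  ring_nf
  simp only [Finset.mul_sum, ← Finset.sum_mul]
  ring

lemma dot_mulVec_symm {n : ℕ} {A : Matrix (Fin n) (Fin n) ℝ} (hA : Aᵀ = A)
    (u v : Fin n → ℝ) : u ⬝ᵥ (A *ᵥ v) = (A *ᵥ u) ⬝ᵥ v := by
  rw [Matrix.dotProduct_mulVec]
  congr 1
  conv_lhs => rw [← hA]
  exact Matrix.vecMul_transpose _ _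

lemma gram_symm (hk : IsKernel k) {m : ℕ} (X : Fin m → 𝒳) :
    (gramMat k X)ᵀ = gramMat k X := by
  ext i j; simp [gramMat, Matrix.transpose_apply, hk.1 (X j) (X i)]

lemma A_symm (hk : IsKernel k) {m : ℕ} (X : Fin m → 𝒳) (l2 : ℝ) :
    (gramMat k X + l2 • (1 : Matrix (Fin m) (Fin m) ℝ))ᵀ
      = gramMat k X + l2 • (1 : Matrix (Fin m) (Fin m) ℝ) := by
  rw [Matrix.transpose_add, gram_symm hk, Matrix.transpose_smul, Matrix.transpose_one]

lemma Ainv_symm (hk : IsKernel k) {m : ℕ} (X : Fin m → 𝒳) (l2 : ℝ) :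
    ((gramMat k X + l2 • (1 : Matrix (Fin m) (Fin m) ℝ))⁻¹)ᵀ
      = (gramMat k X + l2 • (1 : Matrix (Fin m) (Fin m) ℝ))⁻¹ := by
  rw [Matrix.transpose_nonsing_inv, A_symm hk]

lemma A_mul_inv (hk : IsKernel k) {m : ℕ} (X : Fin m → 𝒳) {l2 : ℝ} (hl2 : 0 < l2) :
    (gramMat k X + l2 • (1 : Matrix (Fin m) (Fin m) ℝ))
      * (gramMat k X + l2 • (1 : Matrix (Fin m) (Fin m) ℝ))⁻¹ = 1 :=
  Matrix.mul_nonsing_inv _ ((A_posdef hk X hl2).det_pos.ne'.isUnit)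

lemma postVar_le_quad (hk : IsKernel k) {t : ℕ} (X : Fin t → 𝒳) (x : 𝒳) {l2 : ℝ}
    (hl2 : 0 < l2) (w : Fin t → ℝ) :
    postVar k (l2 • (1 : Matrix (Fin t) (Fin t) ℝ)) X x
      ≤ k x x - 2 * (w ⬝ᵥ kVec k X x)
        + w ⬝ᵥ ((gramMat k X + l2 • (1 : Matrix (Fin t) (Fin t) ℝ)) *ᵥ w) := by
  set A := gramMat k X + l2 • (1 : Matrix (Fin t) (Fin t) ℝ) with hAdef
  set v := kVec k X x with hv
  set z := A⁻¹ *ᵥ v with hz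
  have hAz : A *ᵥ z = v := by
    rw [hz, Matrix.mulVec_mulVec, A_mul_inv hk X hl2, Matrix.one_mulVec]
  have h0 := (A_posdef hk X hl2).posSemidef.dotProduct_mulVec_nonneg (w - z)
  rw [star_trivial] at h0
  have hsym := A_symm hk X l2
  have hexp : (w - z) ⬝ᵥ (A *ᵥ (w - z))
      = w ⬝ᵥ (A *ᵥ w) - 2 * (w ⬝ᵥ v) + v ⬝ᵥ z := by
    have h1 : z ⬝ᵥ (A *ᵥ w) = w ⬝ᵥ v := by
      rw [dot_mulVec_symm hsym, hAz, dotProduct_comm]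
    have h2 : z ⬝ᵥ (A *ᵥ z) = v ⬝ᵥ z := by rw [hAz, dotProduct_comm]
    have h3 : w ⬝ᵥ (A *ᵥ z) = w ⬝ᵥ v := by rw [hAz]
    rw [Matrix.mulVec_sub, sub_dotProduct, dotProduct_sub,
      dotProduct_sub, h1, h2, h3]
    ring
  have hpv : postVar k (l2 • (1 : Matrix (Fin t) (Fin t) ℝ)) X x = k x x - v ⬝ᵥ z := rfl
  rw [hpv]
  rw [hexp] at h0
  linarith

lemma postVar_nonneg (hk : IsKernel k) {t : ℕ} (X : Fin t → 𝒳) (x : 𝒳) {l2 : ℝ}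
    (hl2 : 0 < l2) :
    0 ≤ postVar k (l2 • (1 : Matrix (Fin t) (Fin t) ℝ)) X x := by
  set A := gramMat k X + l2 • (1 : Matrix (Fin t) (Fin t) ℝ) with hAdef
  set v := kVec k X x with hv
  set z := A⁻¹ *ᵥ v with hz
  have hAz : A *ᵥ z = v := by
    rw [hz, Matrix.mulVec_mulVec, A_mul_inv hk X hl2, Matrix.one_mulVec]
  have hG : gramMat k X *ᵥ z = v - l2 • z := by
    have : A *ᵥ z = gramMat k X *ᵥ z + l2 • z := by
      rw [hAdef, Matrix.add_mulVec, Matrix.smul_mulVec, Matrix.one_mulVec]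
    rw [hAz] at this
    rw [eq_sub_iff_add_eq, ← this]
  have h1 := quad_key hk X x z
  rw [hG] at h1
  have h2 : z ⬝ᵥ (v - l2 • z) = z ⬝ᵥ v - l2 * (z ⬝ᵥ z) := by
    rw [dotProduct_sub, dotProduct_smul]; ring_nf
  have h3 : 0 ≤ z ⬝ᵥ z := by
    simp only [dotProduct]
    exact Finset.sum_nonneg fun i _ => mul_self_nonneg (z i)
  have hzv : z ⬝ᵥ v = v ⬝ᵥ z := dotProduct_comm _ _
  have hpv : postVar k (l2 • (1 : Matrix (Fin t) (Fin t) ℝ)) X x = k x x - v ⬝ᵥ z := rfl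
  rw [hpv]
  rw [h2, hzv] at h1
  nlinarith

/-- zero-padding of a vector -/
def padV {t T : ℕ} (h : t ≤ T) (w : Fin t → ℝ) : Fin T → ℝ :=
  fun i => if hi : (i : ℕ) < t then w ⟨i, hi⟩ else 0

lemma sum_pad {t T : ℕ} (h : t ≤ T) (w : Fin t → ℝ) (g : Fin T → ℝ) :
    ∑ i : Fin T, padV h w i * g i = ∑ j : Fin t, w j * g (Fin.castLE h j) := by
  classical
  have hzero : ∀ i ∈ (Finset.univ : Finset (Fin T)),
      i ∉ Finset.univ.map (Fin.castLEEmb h) → padV h w i * g i = 0 := by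
    intro i _ hi
    have hnot : ¬ (i : ℕ) < t := by
      intro hlt
      exact hi (Finset.mem_map.mpr ⟨⟨i, hlt⟩, Finset.mem_univ _, by ext; rfl⟩)
    simp [padV, hnot]
  rw [← Finset.sum_subset (Finset.subset_univ _) hzero, Finset.sum_map]
  apply Finset.sum_congr rfl
  intro j _
  have h1 : ((Fin.castLEEmb h) j) = Fin.castLE h j := rfl
  rw [h1]
  have h2 : padV h w (Fin.castLE h j) = w j := by
    have : ((Fin.castLE h j : Fin T) : ℕ) < t := by simp [j.isLt]
    simp only [padV, dif_pos this]
    congr 1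
  rw [h2]

lemma postVar_mono (hk : IsKernel k) {t T : ℕ} (htT : t ≤ T) (xs : ℕ → 𝒳) (x : 𝒳)
    {l2 : ℝ} (hl2 : 0 < l2) :
    postVar k (l2 • (1 : Matrix (Fin T) (Fin T) ℝ)) (preT xs T) x
      ≤ postVar k (l2 • (1 : Matrix (Fin t) (Fin t) ℝ)) (preT xs t) x := by
  set A := gramMat k (preT xs t) + l2 • (1 : Matrix (Fin t) (Fin t) ℝ) with hAdef
  set v := kVec k (preT xs t) x with hv
  set z := A⁻¹ *ᵥ v with hz
  have hAz : A *ᵥ z = v := by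
    rw [hz, Matrix.mulVec_mulVec, A_mul_inv hk _ hl2, Matrix.one_mulVec]
  set w : Fin T → ℝ := padV htT z with hw
  have key := postVar_le_quad hk (preT xs T) x hl2 w
  -- compute the three pieces
  have e1 : w ⬝ᵥ kVec k (preT xs T) x = z ⬝ᵥ v := by
    rw [hv]; exact sum_pad htT z _
  have hentry : ∀ (j j' : Fin t),
      (gramMat k (preT xs T) + l2 • (1 : Matrix (Fin T) (Fin T) ℝ))
        (Fin.castLE htT j) (Fin.castLE htT j') = A j j' := by
    intro j j'
    have hg : gramMat k (preT xs T) (Fin.castLE htT j) (Fin.castLE htT j')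
        = gramMat k (preT xs t) j j' := rfl
    have ho : (1 : Matrix (Fin T) (Fin T) ℝ) (Fin.castLE htT j) (Fin.castLE htT j')
        = (1 : Matrix (Fin t) (Fin t) ℝ) j j' := by
      simp [Matrix.one_apply, Fin.castLE_inj]
    simp only [Matrix.add_apply, Matrix.smul_apply, hg, ho, hAdef, smul_eq_mul]
  have e2 : w ⬝ᵥ ((gramMat k (preT xs T) + l2 • (1 : Matrix (Fin T) (Fin T) ℝ)) *ᵥ w)
      = z ⬝ᵥ (A *ᵥ z) := by
    have := sum_pad htT z
      (fun i => ((gramMat k (preT xs T) + l2 • (1 : Matrix (Fin T) (Fin T) ℝ)) *ᵥ w) i)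
    show ∑ i : Fin T, padV htT z i
        * ((gramMat k (preT xs T) + l2 • (1 : Matrix (Fin T) (Fin T) ℝ)) *ᵥ w) i = _
    rw [this]
    apply Finset.sum_congr rfl
    intro j _
    congr 1
    show ∑ i : Fin T,
        (gramMat k (preT xs T) + l2 • (1 : Matrix (Fin T) (Fin T) ℝ)) (Fin.castLE htT j) i
          * padV htT z i = (A *ᵥ z) j
    rw [Finset.sum_congr rfl (fun i _ => mul_comm _ _)]
    rw [sum_pad htT z
      (fun i => (gramMat k (preT xs T) + l2 • (1 : Matrix (Fin T) (Fin T) ℝ))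
        (Fin.castLE htT j) i)]
    show ∑ j' : Fin t, z j'
        * (gramMat k (preT xs T) + l2 • (1 : Matrix (Fin T) (Fin T) ℝ))
          (Fin.castLE htT j) (Fin.castLE htT j') = _
    rw [Finset.sum_congr rfl (fun j' _ => by rw [hentry j j', mul_comm])]
    rfl
  rw [e1, e2, hAz] at key
  have : k x x - 2 * (z ⬝ᵥ v) + z ⬝ᵥ v
      = postVar k (l2 • (1 : Matrix (Fin t) (Fin t) ℝ)) (preT xs t) x := by
    have hpv : postVar k (l2 • (1 : Matrix (Fin t) (Fin t) ℝ)) (preT xs t) x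
        = k x x - v ⬝ᵥ z := rfl
    rw [hpv, dotProduct_comm]; ring
  rw [this] at key
  exact key

lemma det_step (hk : IsKernel k) (xs : ℕ → 𝒳) {l2 : ℝ} (hl2 : 0 < l2) (t : ℕ) :
    (gramMat k (preT xs (t+1)) + l2 • (1 : Matrix (Fin (t+1)) (Fin (t+1)) ℝ)).det
      = (gramMat k (preT xs t) + l2 • (1 : Matrix (Fin t) (Fin t) ℝ)).det
        * (l2 + postVar k (l2 • (1 : Matrix (Fin t) (Fin t) ℝ)) (preT xs t) (xs t)) := by
  classical
  set A := gramMat k (preT xs t) + l2 • (1 : Matrix (Fin t) (Fin t) ℝ) with hAdef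
  set b := kVec k (preT xs t) (xs t) with hb
  set B : Matrix (Fin t) (Fin 1) ℝ := Matrix.of (fun i _ => b i) with hB
  set C : Matrix (Fin 1) (Fin t) ℝ := Matrix.of (fun _ j => b j) with hC
  set D : Matrix (Fin 1) (Fin 1) ℝ := Matrix.of (fun _ _ => k (xs t) (xs t) + l2) with hD
  have hsub : (gramMat k (preT xs (t+1)) + l2 • (1 : Matrix (Fin (t+1)) (Fin (t+1)) ℝ)).submatrix
      (finSumFinEquiv (m := t) (n := 1)) (finSumFinEquiv (m := t) (n := 1))
      = Matrix.fromBlocks A B C D := by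
    ext i j
    cases i with
    | inl i =>
      cases j with
      | inl j =>
        simp only [Matrix.submatrix_apply, Matrix.fromBlocks_apply₁₁, finSumFinEquiv_apply_left,
          Matrix.add_apply, Matrix.smul_apply, Matrix.one_apply, gramMat, Matrix.of_apply,
          hAdef, smul_eq_mul]
        have : (Fin.castAdd 1 i = Fin.castAdd 1 j) ↔ (i = j) := by
          constructor
          · intro hcast; exact Fin.ext (by simpa [Fin.ext_iff] using hcast)
          · intro hij; rw [hij]
        simp [preT, this]
      | inr j =>
        have hj : (j : ℕ) = 0 := by omega
        simp only [Matrix.submatrix_apply, Matrix.fromBlocks_apply₁₂, finSumFinEquiv_apply_left,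
          finSumFinEquiv_apply_right, Matrix.add_apply, Matrix.smul_apply, Matrix.one_apply,
          gramMat, Matrix.of_apply, hB, smul_eq_mul]
        have hne : ¬ ((Fin.castAdd 1 i : Fin (t+1)) = Fin.natAdd t j) := by
          simp [Fin.ext_iff, hj]; omega
        have hpre : preT xs (t+1) (Fin.natAdd t j) = xs t := by
          simp [preT, hj]
        simp [hne, hpre, hb, kVec, preT, hk.1 (xs (i:ℕ)) (xs t)]
    | inr i =>
      have hi : (i : ℕ) = 0 := by omega
      cases j with
      | inl j =>
        have hne : ¬ ((Fin.natAdd t i : Fin (t+1)) = Fin.castAdd 1 j) := by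
          simp [Fin.ext_iff, hi]; omega
        have hpre : preT xs (t+1) (Fin.natAdd t i) = xs t := by simp [preT, hi]
        simp only [Matrix.submatrix_apply, Matrix.fromBlocks_apply₂₁, finSumFinEquiv_apply_left,
          finSumFinEquiv_apply_right, Matrix.add_apply, Matrix.smul_apply, Matrix.one_apply,
          gramMat, Matrix.of_apply, hC, smul_eq_mul]
        simp [hne, hpre, hb, kVec, preT]
      | inr j =>
        have hi' : i = j := Subsingleton.elim i j
        subst hi'
        have hpre : preT xs (t+1) (Fin.natAdd t i) = xs t := by simp [preT, hi]
        simp only [Matrix.submatrix_apply, Matrix.fromBlocks_apply₂₂, finSumFinEquiv_apply_right,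
          Matrix.add_apply, Matrix.smul_apply, Matrix.one_apply, gramMat, Matrix.of_apply,
          hD, smul_eq_mul]
        simp [hpre, add_comm]
  have hdet1 : (gramMat k (preT xs (t+1))
      + l2 • (1 : Matrix (Fin (t+1)) (Fin (t+1)) ℝ)).det = (Matrix.fromBlocks A B C D).det := by
    rw [← hsub, Matrix.det_submatrix_equiv_self]
  haveI : Invertible A := A.invertibleOfIsUnitDet ((A_posdef hk _ hl2).det_pos.ne'.isUnit)
  rw [hdet1, Matrix.det_fromBlocks₁₁]
  congr 1
  rw [Matrix.det_fin_one]
  have hinv : (⅟A : Matrix (Fin t) (Fin t) ℝ) = A⁻¹ := Matrix.invOf_eq_nonsing_inv A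
  have hCAB : (C * ⅟A * B) 0 0 = b ⬝ᵥ (A⁻¹ *ᵥ b) := by
    rw [hinv]
    simp only [Matrix.mul_apply, hB, hC, Matrix.of_apply, dotProduct, Matrix.mulVec,
      Finset.sum_mul, Finset.mul_sum]
    rw [Finset.sum_comm]
    apply Finset.sum_congr rfl
    intro i _
    apply Finset.sum_congr rfl
    intro j _
    ring
  have hpv : postVar k (l2 • (1 : Matrix (Fin t) (Fin t) ℝ)) (preT xs t) (xs t)
      = k (xs t) (xs t) - b ⬝ᵥ (A⁻¹ *ᵥ b) := rfl
  simp only [Matrix.sub_apply, hCAB, hD, Matrix.of_apply, hpv]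
  ring

lemma det_prod (hk : IsKernel k) (xs : ℕ → 𝒳) {l2 : ℝ} (hl2 : 0 < l2) (T : ℕ) :
    (gramMat k (preT xs T) + l2 • (1 : Matrix (Fin T) (Fin T) ℝ)).det
      = ∏ t ∈ Finset.range T,
          (l2 + postVar k (l2 • (1 : Matrix (Fin t) (Fin t) ℝ)) (preT xs t) (xs t)) := by
  induction T with
  | zero => simp [Matrix.det_fin_zero]
  | succ n ih => rw [det_step hk xs hl2 n, Finset.prod_range_succ, ih]

lemma infoGain_eq (hk : IsKernel k) (xs : ℕ → 𝒳) {l2 : ℝ} (hl2 : 0 < l2) (T : ℕ) :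
    infoGain k (l2 • (1 : Matrix (Fin T) (Fin T) ℝ)) (preT xs T)
      = (1/2) * ∑ t ∈ Finset.range T,
          Real.log (1 + postVar k (l2 • (1 : Matrix (Fin t) (Fin t) ℝ)) (preT xs t) (xs t) / l2) := by
  have hpos : ∀ t, 0 ≤ postVar k (l2 • (1 : Matrix (Fin t) (Fin t) ℝ)) (preT xs t) (xs t) :=
    fun t => postVar_nonneg hk _ _ hl2
  rw [infoGain]
  congr 1
  have hdetS : (l2 • (1 : Matrix (Fin T) (Fin T) ℝ)).det = l2 ^ T := by
    simp [Matrix.det_smul]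
  have hadd : l2 • (1 : Matrix (Fin T) (Fin T) ℝ) + gramMat k (preT xs T)
      = gramMat k (preT xs T) + l2 • (1 : Matrix (Fin T) (Fin T) ℝ) := add_comm _ _
  rw [hadd, det_prod hk xs hl2 T, hdetS]
  rw [show l2 ^ T = ∏ t ∈ Finset.range T, l2 by simp]
  rw [← Finset.prod_div_distrib]
  rw [Real.log_prod]
  · apply Finset.sum_congr rfl
    intro t _
    congr 1
    field_simp
  · intro t _
    have := hpos t
    positivity

lemma key_bound (hk : IsKernel k) (xs : ℕ → 𝒳) {l2 : ℝ} (hl2 : 0 < l2) {T : ℕ}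
    (x : 𝒳)
    (hxle : ∀ t, t < T →
      postVar k (l2 • (1 : Matrix (Fin t) (Fin t) ℝ)) (preT xs t) x
        ≤ postVar k (l2 • (1 : Matrix (Fin t) (Fin t) ℝ)) (preT xs t) (xs t)) :
    (T : ℝ) * Real.log (1 + postVar k (l2 • (1 : Matrix (Fin T) (Fin T) ℝ)) (preT xs T) x / l2)
      ≤ 2 * infoGain k (l2 • (1 : Matrix (Fin T) (Fin T) ℝ)) (preT xs T) := by
  rw [infoGain_eq hk xs hl2 T]
  have hterm : ∀ t ∈ Finset.range T,
      Real.log (1 + postVar k (l2 • (1 : Matrix (Fin T) (Fin T) ℝ)) (preT xs T) x / l2)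
        ≤ Real.log (1 + postVar k (l2 • (1 : Matrix (Fin t) (Fin t) ℝ)) (preT xs t) (xs t) / l2) := by
    intro t ht
    rw [Finset.mem_range] at ht
    have h1 : postVar k (l2 • (1 : Matrix (Fin T) (Fin T) ℝ)) (preT xs T) x
        ≤ postVar k (l2 • (1 : Matrix (Fin t) (Fin t) ℝ)) (preT xs t) (xs t) :=
      le_trans (postVar_mono hk (le_of_lt ht) xs x hl2) (hxle t ht)
    have h0 : 0 ≤ postVar k (l2 • (1 : Matrix (Fin T) (Fin T) ℝ)) (preT xs T) x :=
      postVar_nonneg hk _ _ hl2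
    apply Real.log_le_log (by positivity)
    gcongr
  have := Finset.card_nsmul_le_sum (Finset.range T)
    (fun t => Real.log (1 + postVar k (l2 • (1 : Matrix (Fin t) (Fin t) ℝ)) (preT xs t) (xs t) / l2))
    (Real.log (1 + postVar k (l2 • (1 : Matrix (Fin T) (Fin T) ℝ)) (preT xs T) x / l2))
    hterm
  rw [Finset.card_range, nsmul_eq_mul] at this
  linarith

end Aux

lemma analysis_bound (d : ℕ) (hd : 0 < d) (ν : ℝ) (hν : 1/2 < ν) (α : ℝ) (hα : 0 < α)
    (c : ℝ) (hc : 0 < c) (Cb : ℝ) (hCb : 0 < Cb) :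
    ∃ Tb : ℕ, 0 < Tb ∧ ∀ T : ℕ, Tb ≤ T → ∀ l2 : ℝ,
      c * (T:ℝ) ^ (-(2*ν)/(d:ℝ)) * (Real.log (1+(T:ℝ))) ^ (2*ν*(1+α)/(d:ℝ)) ≤ l2 →
      4 * (Cb * ((T:ℝ)/l2) ^ ((d:ℝ)/(2*ν+(d:ℝ)))
        * (Real.log (1+(T:ℝ)/l2)) ^ (2*ν/(2*ν+(d:ℝ)))) ≤ (T:ℝ) := by
  have hd0 : (0:ℝ) < d := by exact_mod_cast hd
  have hν0 : (0:ℝ) < ν := by linarith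
  have hs : (0:ℝ) < 2*ν + d := by linarith
  set p : ℝ := (d:ℝ)/(2*ν+(d:ℝ)) with hpdef
  set q : ℝ := 2*ν/(2*ν+(d:ℝ)) with hqdef
  set r : ℝ := (2*ν+(d:ℝ))/(d:ℝ) with hrdef
  set e1 : ℝ := 2*ν*(1+α)/(d:ℝ) with he1def
  have hp : 0 < p := by positivity
  have hq : 0 < q := by positivity
  have hr : 0 < r := by positivity
  have hr1 : 1 ≤ r := by rw [hrdef, le_div_iff₀ hd0]; linarith
  have he1 : 0 < e1 := by positivity
  set C1 : ℝ := 1 + 1/c with hC1def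
  have hC1 : 1 < C1 := by rw [hC1def]; have := one_div_pos.mpr hc; linarith
  have hlogC1 : 0 ≤ Real.log C1 := Real.log_nonneg hC1.le
  set C2 : ℝ := Real.log C1 + r with hC2def
  have hC2 : 0 < C2 := by positivity
  set K : ℝ := 4 * Cb * c ^ (-p) * C2 ^ q with hKdef
  have hK : 0 < K := by
    have := Real.rpow_pos_of_pos hc (-p)
    have := Real.rpow_pos_of_pos hC2 q
    positivity
  set β : ℝ := 2*ν*α/(2*ν+(d:ℝ)) with hβdef
  have hβ : 0 < β := by positivity
  set M : ℝ := max 1 (K ^ (1/β)) with hMdef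
  have hM1 : (1:ℝ) ≤ M := le_max_left _ _
  have hM0 : (0:ℝ) < M := by linarith
  refine ⟨⌈Real.exp M⌉₊ + 1, Nat.succ_pos _, ?_⟩
  intro T hTb l2 hl2low
  have hexpT : Real.exp M ≤ (T:ℝ) := by
    calc Real.exp M ≤ (⌈Real.exp M⌉₊ : ℝ) := Nat.le_ceil _
    _ ≤ (T:ℝ) := by exact_mod_cast Nat.le_of_succ_le hTb
  have hT1 : (1:ℝ) ≤ T := by
    have h2 : M + 1 ≤ Real.exp M := Real.add_one_le_exp M
    linarith
  have hT0 : (0:ℝ) < T := by linarith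
  have hG : M ≤ Real.log (1 + (T:ℝ)) := by
    calc M = Real.log (Real.exp M) := (Real.log_exp M).symm
    _ ≤ Real.log (1 + (T:ℝ)) := Real.log_le_log (Real.exp_pos M) (by linarith)
  set G : ℝ := Real.log (1 + (T:ℝ)) with hGdef
  have hG1 : (1:ℝ) ≤ G := le_trans hM1 hG
  have hG0 : (0:ℝ) < G := by linarith
  set L : ℝ := G ^ e1 with hLdef
  have hL1 : (1:ℝ) ≤ L := Real.one_le_rpow hG1 he1.le
  have hL0 : (0:ℝ) < L := by linarith
  set μ : ℝ := c * (T:ℝ) ^ (-(2*ν)/(d:ℝ)) * L with hμdef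
  have hTpow : (0:ℝ) < (T:ℝ) ^ (-(2*ν)/(d:ℝ)) := Real.rpow_pos_of_pos hT0 _
  have hμ0 : 0 < μ := by positivity
  have hl2 : 0 < l2 := lt_of_lt_of_le hμ0 hl2low
  -- T/μ = T^r/(c*L)
  have hTr : (T:ℝ) ^ r = (T:ℝ) * (T:ℝ) ^ (2*ν/(d:ℝ)) := by
    rw [show r = 1 + 2*ν/(d:ℝ) by rw [hrdef]; field_simp; ring]
    rw [Real.rpow_add hT0, Real.rpow_one]
  have hText : (T:ℝ) ^ (-(2*ν)/(d:ℝ)) = ((T:ℝ) ^ (2*ν/(d:ℝ)))⁻¹ := by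
    rw [neg_div, Real.rpow_neg hT0.le]
  have hTpow2 : (0:ℝ) < (T:ℝ) ^ (2*ν/(d:ℝ)) := Real.rpow_pos_of_pos hT0 _
  have hTμ : (T:ℝ)/μ = (T:ℝ) ^ r / (c * L) := by
    rw [hμdef, hText, hTr]
    field_simp
  have h1 : (T:ℝ)/l2 ≤ (T:ℝ)/μ := by gcongr
  -- power bound
  have hcL0 : (0:ℝ) < c * L := by positivity
  have hrp1 : r * p = 1 := by rw [hrdef, hpdef]; field_simp
  have h2 : ((T:ℝ)/l2) ^ p ≤ (T:ℝ) / (c*L) ^ p := by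
    calc ((T:ℝ)/l2) ^ p ≤ ((T:ℝ)/μ) ^ p :=
      Real.rpow_le_rpow (by positivity) h1 hp.le
    _ = (T:ℝ) / (c*L) ^ p := by
        rw [hTμ, Real.div_rpow (by positivity) hcL0.le, ← Real.rpow_mul hT0.le, hrp1,
          Real.rpow_one]
  -- log bound
  have hTr0 : (0:ℝ) < (1+(T:ℝ)) ^ r := Real.rpow_pos_of_pos (by linarith) _
  have h3a : (T:ℝ)/l2 ≤ (1+(T:ℝ)) ^ r / c := by
    calc (T:ℝ)/l2 ≤ (T:ℝ)/μ := h1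
    _ = (T:ℝ) ^ r / (c*L) := hTμ
    _ ≤ (T:ℝ) ^ r / (c * 1) := by gcongr <;> first | exact Real.rpow_nonneg hT0.le r | linarith
    _ ≤ (1+(T:ℝ)) ^ r / (c*1) := by gcongr <;> linarith
    _ = (1+(T:ℝ)) ^ r / c := by rw [mul_one]
  have h3b : 1 + (T:ℝ)/l2 ≤ C1 * (1+(T:ℝ)) ^ r := by
    have hone : (1:ℝ) ≤ (1+(T:ℝ)) ^ r := Real.one_le_rpow (by linarith) hr.le
    have h3a' : (T:ℝ)/l2 ≤ (1/c) * (1+(T:ℝ)) ^ r := by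
      calc (T:ℝ)/l2 ≤ (1+(T:ℝ)) ^ r / c := h3a
      _ = (1/c) * (1+(T:ℝ)) ^ r := by ring
    have hexpand : C1 * (1+(T:ℝ)) ^ r = (1+(T:ℝ)) ^ r + (1/c) * (1+(T:ℝ)) ^ r := by
      rw [hC1def]; ring
    linarith
  have hTl20 : (0:ℝ) ≤ (T:ℝ)/l2 := by positivity
  have h3 : Real.log (1 + (T:ℝ)/l2) ≤ C2 * G := by
    calc Real.log (1 + (T:ℝ)/l2) ≤ Real.log (C1 * (1+(T:ℝ)) ^ r) :=
      Real.log_le_log (by linarith) h3b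
    _ = Real.log C1 + r * G := by
        rw [Real.log_mul (by linarith) (ne_of_gt hTr0), Real.log_rpow (by linarith), hGdef]
    _ ≤ C2 * G := by
        have h6 : Real.log C1 * 1 ≤ Real.log C1 * G := mul_le_mul_of_nonneg_left hG1 hlogC1
        have h7 : C2 * G = Real.log C1 * G + r * G := by rw [hC2def]; ring
        linarith
  have hlogl2 : (0:ℝ) ≤ Real.log (1 + (T:ℝ)/l2) := Real.log_nonneg (by linarith)
  have h4 : (Real.log (1 + (T:ℝ)/l2)) ^ q ≤ C2 ^ q * G ^ q := by
    calc (Real.log (1 + (T:ℝ)/l2)) ^ q ≤ (C2 * G) ^ q :=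
      Real.rpow_le_rpow hlogl2 h3 hq.le
    _ = C2 ^ q * G ^ q := Real.mul_rpow hC2.le hG0.le
  -- combine
  have hX0 : (0:ℝ) ≤ ((T:ℝ)/l2) ^ p := Real.rpow_nonneg (by positivity) _
  have hX'0 : (0:ℝ) ≤ (T:ℝ) / (c*L) ^ p := by positivity
  have hY'0 : (0:ℝ) ≤ C2 ^ q * G ^ q := by positivity
  have hcomb : 4 * (Cb * ((T:ℝ)/l2) ^ p * (Real.log (1 + (T:ℝ)/l2)) ^ q)
      ≤ 4 * Cb * ((T:ℝ) / (c*L) ^ p) * (C2 ^ q * G ^ q) := by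
    have step1 : Cb * ((T:ℝ)/l2) ^ p * (Real.log (1 + (T:ℝ)/l2)) ^ q
        ≤ Cb * ((T:ℝ) / (c*L) ^ p) * (C2 ^ q * G ^ q) := by
      apply mul_le_mul
      · exact mul_le_mul_of_nonneg_left h2 hCb.le
      · exact h4
      · exact Real.rpow_nonneg hlogl2 _
      · positivity
    linarith
  -- identify E with K * T * G^(-β)
  have hLp : L ^ p = G ^ (e1 * p) := by
    rw [hLdef, ← Real.rpow_mul hG0.le]
  have hexp_eq : -β = q - e1 * p := by
    rw [hβdef, hqdef, he1def, hpdef]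
    field_simp
    ring
  have hE : 4 * Cb * ((T:ℝ) / (c*L) ^ p) * (C2 ^ q * G ^ q) = K * (T:ℝ) * G ^ (-β) := by
    rw [Real.mul_rpow hc.le hL0.le, hLp, hexp_eq, Real.rpow_sub hG0, hKdef,
      Real.rpow_neg hc.le]
    have hne1 : (c ^ p) ≠ 0 := ne_of_gt (Real.rpow_pos_of_pos hc _)
    have hne2 : G ^ (e1*p) ≠ 0 := ne_of_gt (Real.rpow_pos_of_pos hG0 _)
    field_simp
  -- final bound
  have hMβ : K ≤ M ^ β := by
    have h5 : K ^ (1/β) ≤ M := le_max_right _ _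
    have heq : K = (K ^ (1/β)) ^ β := by
      rw [← Real.rpow_mul hK.le, one_div_mul_cancel hβ.ne', Real.rpow_one]
    rw [heq]
    exact Real.rpow_le_rpow (Real.rpow_nonneg hK.le _) h5 hβ.le
  have hGβ : G ^ (-β) ≤ M ^ (-β) := Real.rpow_le_rpow_of_nonpos hM0 hG (by linarith)
  have hMβ0 : (0:ℝ) < M ^ β := Real.rpow_pos_of_pos hM0 _
  have hfin : K * (T:ℝ) * G ^ (-β) ≤ (T:ℝ) := by
    calc K * (T:ℝ) * G ^ (-β) ≤ K * (T:ℝ) * M ^ (-β) :=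
      mul_le_mul_of_nonneg_left hGβ (by positivity)
    _ = (K * (M ^ β)⁻¹) * (T:ℝ) := by rw [Real.rpow_neg hM0.le]; ring
    _ ≤ 1 * (T:ℝ) := by
        have h8 : K * (M ^ β)⁻¹ ≤ 1 := by
          rw [← div_eq_mul_inv]
          exact div_le_one_of_le₀ hMβ hMβ0.le
        exact mul_le_mul_of_nonneg_right h8 hT0.le
    _ = (T:ℝ) := one_mul _
  calc 4 * (Cb * ((T:ℝ)/l2) ^ p * (Real.log (1 + (T:ℝ)/l2)) ^ q)
      ≤ 4 * Cb * ((T:ℝ) / (c*L) ^ p) * (C2 ^ q * G ^ q) := hcomb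
  _ = K * (T:ℝ) * G ^ (-β) := hE
  _ ≤ (T:ℝ) := hfin

/-- MVR posterior variance bound under the Matérn-type
information-gain bound, with `T̄` depending only on `c`, `C̄`, `α`, `d`, `ν`. -/
theorem mvr_posterior_variance_bound_Matern
    (d : ℕ) (hd : 0 < d) (ν : ℝ) (hν : 1 / 2 < ν) (α : ℝ) (hα : 0 < α)
    (c : ℝ) (hc : 0 < c) (Cb : ℝ) (hCb : 0 < Cb) :
    ∃ Tb : ℕ, 0 < Tb ∧
      ∀ (𝒳 : Type u) (k : 𝒳 → 𝒳 → ℝ), IsKernel k →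
      (∀ m : ℕ, 0 < m → ∀ l : ℝ, 0 < l → ∀ Z : Fin m → 𝒳,
        infoGain k ((l ^ 2) • (1 : Matrix (Fin m) (Fin m) ℝ)) Z
          ≤ Cb * ((m : ℝ) / l ^ 2) ^ ((d : ℝ) / (2 * ν + (d : ℝ)))
              * (Real.log (1 + (m : ℝ) / l ^ 2)) ^ (2 * ν / (2 * ν + (d : ℝ)))) →
      ∀ lamBar : ℕ → ℝ, (∀ T, 0 < lamBar T) →
      (∀ T : ℕ, 0 < T →
        c * (T : ℝ) ^ (-(2 * ν) / (d : ℝ))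
            * (Real.log (1 + (T : ℝ))) ^ (2 * ν * (1 + α) / (d : ℝ)) ≤ lamBar T ^ 2) →
      ∀ Xtil : Set 𝒳, Xtil.Nonempty →
      ∀ xs : ℕ → ℕ → 𝒳,
      (∀ T, 0 < T → ∀ t < T, xs T t ∈ Xtil) →
      (∀ T, 0 < T → ∀ t < T, ∀ x ∈ Xtil,
        postStd k ((lamBar T ^ 2) • (1 : Matrix (Fin t) (Fin t) ℝ)) (preT (xs T) t) x
          ≤ postStd k ((lamBar T ^ 2) • (1 : Matrix (Fin t) (Fin t) ℝ)) (preT (xs T) t)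
              (xs T t)) →
      ∀ T, Tb ≤ T → ∀ x ∈ Xtil,
        postStd k ((lamBar T ^ 2) • (1 : Matrix (Fin T) (Fin T) ℝ)) (preT (xs T) T) x
          ≤ (4 / (T : ℝ)) * Real.sqrt (lamBar T ^ 2 * T
              * (Cb * ((T : ℝ) / lamBar T ^ 2) ^ ((d : ℝ) / (2 * ν + (d : ℝ)))
                  * (Real.log (1 + (T : ℝ) / lamBar T ^ 2)) ^ (2 * ν / (2 * ν + (d : ℝ))))) := by
  obtain ⟨Tb, hTb0, hTb⟩ := analysis_bound d hd ν hν α hα c hc Cb hCb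
  refine ⟨Tb, hTb0, ?_⟩
  intro 𝒳 k hk hIG lamBar hlam hlamlow Xtil hXtil xs hxsmem hMVR T hTT x hx
  have hT0 : 0 < T := lt_of_lt_of_le hTb0 hTT
  have hT0' : (0:ℝ) < T := by exact_mod_cast hT0
  set l2 : ℝ := lamBar T ^ 2 with hl2def
  have hl2 : 0 < l2 := by rw [hl2def]; exact pow_pos (hlam T) 2
  set γ : ℝ := Cb * ((T : ℝ) / l2) ^ ((d : ℝ) / (2 * ν + (d : ℝ)))
      * (Real.log (1 + (T : ℝ) / l2)) ^ (2 * ν / (2 * ν + (d : ℝ))) with hγdef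
  have hγ0 : 0 ≤ γ := by
    have h1 : (0:ℝ) ≤ ((T : ℝ) / l2) ^ ((d : ℝ) / (2 * ν + (d : ℝ))) :=
      Real.rpow_nonneg (by positivity) _
    have h2 : (0:ℝ) ≤ Real.log (1 + (T : ℝ) / l2) := Real.log_nonneg (by
      have : (0:ℝ) ≤ (T:ℝ)/l2 := by positivity
      linarith)
    have h3 : (0:ℝ) ≤ (Real.log (1 + (T : ℝ) / l2)) ^ (2 * ν / (2 * ν + (d : ℝ))) :=
      Real.rpow_nonneg h2 _
    exact mul_nonneg (mul_nonneg hCb.le h1) h3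
  have hIGb : infoGain k (l2 • (1 : Matrix (Fin T) (Fin T) ℝ)) (preT (xs T) T) ≤ γ :=
    hIG T hT0 (lamBar T) (hlam T) (preT (xs T) T)
  have hana : 4 * γ ≤ (T:ℝ) := hTb T hTT l2 (hlamlow T hT0)
  -- MVR gives variance comparison
  have hxle : ∀ t, t < T →
      postVar k (l2 • (1 : Matrix (Fin t) (Fin t) ℝ)) (preT (xs T) t) x
        ≤ postVar k (l2 • (1 : Matrix (Fin t) (Fin t) ℝ)) (preT (xs T) t) (xs T t) := by
    intro t ht
    have hstd := hMVR T hT0 t ht x hx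
    have h1 : 0 ≤ postVar k (l2 • (1 : Matrix (Fin t) (Fin t) ℝ)) (preT (xs T) t) x :=
      postVar_nonneg hk _ _ hl2
    have h2 : 0 ≤ postVar k (l2 • (1 : Matrix (Fin t) (Fin t) ℝ)) (preT (xs T) t) (xs T t) :=
      postVar_nonneg hk _ _ hl2
    calc postVar k (l2 • (1 : Matrix (Fin t) (Fin t) ℝ)) (preT (xs T) t) x
        = Real.sqrt (postVar k (l2 • (1 : Matrix (Fin t) (Fin t) ℝ)) (preT (xs T) t) x) ^ 2 :=
        (Real.sq_sqrt h1).symm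
      _ ≤ Real.sqrt (postVar k (l2 • (1 : Matrix (Fin t) (Fin t) ℝ)) (preT (xs T) t) (xs T t)) ^ 2 := by
        apply pow_le_pow_left₀ (Real.sqrt_nonneg _) hstd
      _ = postVar k (l2 • (1 : Matrix (Fin t) (Fin t) ℝ)) (preT (xs T) t) (xs T t) :=
        Real.sq_sqrt h2
  set V : ℝ := postVar k (l2 • (1 : Matrix (Fin T) (Fin T) ℝ)) (preT (xs T) T) x with hVdef
  have hV0 : 0 ≤ V := postVar_nonneg hk _ _ hl2
  have hkey : (T : ℝ) * Real.log (1 + V / l2) ≤ 2 * γ := by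
    calc (T : ℝ) * Real.log (1 + V / l2)
        ≤ 2 * infoGain k (l2 • (1 : Matrix (Fin T) (Fin T) ℝ)) (preT (xs T) T) :=
        key_bound hk (xs T) hl2 x hxle
      _ ≤ 2 * γ := by linarith
  set a : ℝ := 2 * γ / T with hadef
  have ha0 : 0 ≤ a := by positivity
  have ha12 : a ≤ 1/2 := by
    rw [hadef, div_le_iff₀ hT0']
    linarith
  have hlogV : Real.log (1 + V / l2) ≤ a := by
    rw [hadef, le_div_iff₀ hT0']
    linarith [hkey]
  have hVl2 : 1 + V / l2 ≤ Real.exp a := by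
    rw [← Real.log_le_iff_le_exp (by positivity)]
    exact hlogV
  have hexpa : Real.exp a ≤ 1 / (1 - a) := by
    have h1 : (0:ℝ) < 1 - a := by linarith
    have h2 : 1 - a ≤ (Real.exp a)⁻¹ := by
      have h3 := Real.add_one_le_exp (-a)
      rw [Real.exp_neg] at h3
      linarith
    rw [le_div_iff₀ h1]
    calc Real.exp a * (1 - a) ≤ Real.exp a * (Real.exp a)⁻¹ :=
      mul_le_mul_of_nonneg_left h2 (Real.exp_pos a).le
    _ = 1 := mul_inv_cancel₀ (Real.exp_pos a).ne'
  have hfrac : 1 / (1 - a) ≤ 1 + 2 * a := by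
    have h1 : (0:ℝ) < 1 - a := by linarith
    rw [div_le_iff₀ h1]
    nlinarith
  have hVb : V ≤ 2 * a * l2 := by
    have h1 : V / l2 ≤ 2 * a := by linarith
    calc V = (V / l2) * l2 := by field_simp
    _ ≤ (2 * a) * l2 := mul_le_mul_of_nonneg_right h1 hl2.le
  have hVb2 : V ≤ 16 * l2 * γ / T := by
    have h2 : 2 * a * l2 = 4 * γ * l2 / T := by rw [hadef]; ring
    rw [h2] at hVb
    have h3 : 4 * γ * l2 / T ≤ 16 * l2 * γ / T := by
      rw [div_le_div_iff₀ hT0' hT0']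
      nlinarith [mul_nonneg (mul_nonneg hγ0 hl2.le) hT0'.le]
    linarith
  -- conclude
  show Real.sqrt V ≤ (4 / (T : ℝ)) * Real.sqrt (l2 * T * γ)
  have hrhs : (4 / (T : ℝ)) * Real.sqrt (l2 * T * γ) = Real.sqrt (16 * l2 * γ / T) := by
    rw [show (4:ℝ)/(T:ℝ) = Real.sqrt (((4:ℝ)/T)^2) from (Real.sqrt_sq (by positivity)).symm]
    rw [← Real.sqrt_mul (by positivity) _]
    congr 1
    field_simp
    ring
  rw [hrhs]
  exact Real.sqrt_le_sqrt hVb2
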